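/- For every n ≥ 2 there exist n+2 points A₁,…,A_{n+2} in ℝⁿ with maximum pairwise distance D(S) = 1 such that the sum of all pairwise distances equals C(n+1,2) + 1 + n·√(2(1 − √((n+1)/(2n)))). Consequently sup ω(n, n+2) ≥ C(n+1,2) + 1 + n·√(2(1 − √((n+1)/(2n)))). -/

import Mathlib

private lemma euclidDistEq {n : ℕ} (x y : EuclideanSpace ℝ (Fin n)) :
    dist x y = Real.sqrt (∑ k, (x k - y k) ^ 2) := by
  rw [dist_eq_norm, EuclideanSpace.norm_eq]
  congr 1
  apply Finset.sum_congr rfl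
  intro k _
  rw [Real.norm_eq_abs, sq_abs]
  rfl

private lemma gaussFin (n : ℕ) : (∑ j : Fin (n+2), ((j:ℕ) : ℝ)) = (n+2)*(n+1)/2 := by
  rw [Fin.sum_univ_eq_sum_range (fun m => (m:ℝ)) (n+2)]
  rw [← Nat.cast_sum]
  have h2 : (∑ i ∈ Finset.range (n+2), i) * 2 = (n+2)*(n+1) := by
    simpa using Finset.sum_range_id_mul_two (n+2)
  have h3 : ((∑ i ∈ Finset.range (n+2), i : ℕ) : ℝ) * 2 = (((n+2)*(n+1) : ℕ) : ℝ) := by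
    exact_mod_cast congrArg (fun m : ℕ => (m : ℝ)) h2
  push_cast at h3 ⊢
  linarith

theorem stmt14 (n : ℕ) (hn : 2 ≤ n) :
    ∃ A : Fin (n + 2) → EuclideanSpace ℝ (Fin n),
      IsGreatest {d : ℝ | ∃ i j : Fin (n + 2), i < j ∧ d = dist (A i) (A j)} 1 ∧
      ∑ p ∈ Finset.univ.filter (fun p : Fin (n + 2) × Fin (n + 2) => p.1 < p.2),
          dist (A p.1) (A p.2) =
        ((n + 1).choose 2 : ℝ) + 1 +
          n * Real.sqrt (2 * (1 - Real.sqrt ((n + 1) / (2 * n)))) := by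
  -- scalar setup
  set N : ℝ := (n : ℝ) with hNdef
  have hN : (2:ℝ) ≤ N := by rw [hNdef]; exact_mod_cast hn
  have hN0 : (0:ℝ) < N := by linarith
  set a := Real.sqrt 2 with hadef
  set b := Real.sqrt (N + 1) with hbdef
  set c := Real.sqrt N with hcdef
  have ha : a ^ 2 = 2 := Real.sq_sqrt (by norm_num)
  have hb : b ^ 2 = N + 1 := Real.sq_sqrt (by linarith)
  have hc : c ^ 2 = N := Real.sq_sqrt (by linarith)
  have ha0 : 0 < a := Real.sqrt_pos.2 (by norm_num)
  have hb0 : 0 < b := Real.sqrt_pos.2 (by linarith)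
  have hc0 : 0 < c := Real.sqrt_pos.2 (by linarith)
  set t : ℝ := (1 + b) / (a * N) with htdef
  set w : ℝ := t - c⁻¹ with hwdef
  set q : ℝ := a⁻¹ with hqdef
  have ht : a * N * t = 1 + b := by
    rw [htdef]; field_simp
  have hK : N * t ^ 2 = a * t + 1 / 2 := by
    have key : 2*N*(N * t^2 - (a * t + 1/2)) = 0 := by
      linear_combination (a*N*t + b - 1) * ht + hb - (N^2*t^2) * ha
    have h2N : (2:ℝ)*N ≠ 0 := by positivity
    have := mul_eq_zero.1 key
    rcases this with h | h
    · exact absurd h h2N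
    · linarith
  have hcw : c * w = c * t - 1 := by
    rw [hwdef]; field_simp
  -- squared distance values
  have V1 : N * t ^ 2 + ((t - q) ^ 2 - t ^ 2) = 1 := by
    have e : (t - q) ^ 2 - t ^ 2 = -(a*t) + 1/2 := by
      rw [hqdef]
      field_simp
      linear_combination (2*t*a - 1) * ha
    rw [e]; linarith [hK]
  have V2 : q ^ 2 + q ^ 2 = 1 := by
    rw [hqdef]
    field_simp
    linarith [ha]
  have V3 : N * (c⁻¹) ^ 2 = 1 := by
    field_simp
    linarith [hc]
  have V4 : N * w ^ 2 + ((w - q) ^ 2 - w ^ 2) = 2 * (1 - b / (a * c)) := by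
    have e : (w - q) ^ 2 - w ^ 2 = -(a*w) + 1/2 := by
      rw [hqdef]
      field_simp
      linear_combination (2*w*a - 1) * ha
    rw [e]
    have s2 : c^2*(N*w^2 - a*w + 1/2) = N*(c*t-1)^2 - a*c*(c*t-1) + c^2/2 := by
      linear_combination (N*(c*w + c*t - 1) - a*c) * hcw
    have s3 : N*(c*t-1)^2 - a*c*(c*t-1) + c^2/2 = 2*c^2 - a*b*c := by
      linear_combination N * hK - a*c*ht + c*N*t*ha + (N*t^2 - a*t - 3/2)*hc
    have hc2 : c^2 ≠ 0 := by positivity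
    have : N*w^2 - a*w + 1/2 = (2*c^2 - a*b*c)/c^2 := by
      rw [← s3, ← s2]; field_simp
    rw [show N * w ^ 2 + (-(a*w) + 1/2) = N*w^2 - a*w + 1/2 by ring, this]
    have h1 : a*b*c/c^2 = 2*b/(a*c) := by
      rw [div_eq_div_iff hc2 (by positivity : (0:ℝ) < a*c).ne']
      linear_combination (b*c^2)*ha
    rw [sub_div, mul_div_assoc, div_self hc2, mul_one, h1]
    ring
  have hsq : Real.sqrt ((N + 1) / (2 * N)) = b / (a * c) := by
    rw [show (N+1)/(2*N) = (b/(a*c))^2 by rw [div_pow, mul_pow, ha, hc, hb]]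
    exact Real.sqrt_sq (by positivity)
  set d : ℝ := Real.sqrt (2 * (1 - b / (a * c))) with hddef
  have hd_le_one : d ≤ 1 := by
    rw [hddef]
    rw [Real.sqrt_le_one]
    have hac : a * c ≤ 2 * b := by nlinarith [ha, hb, hc, ha0.le, hb0.le, hc0.le]
    have h1 : (1:ℝ) ≤ 2*b/(a*c) := (le_div_iff₀ (by positivity)).2 (by linarith)
    have h2 : 2*(b/(a*c)) = 2*b/(a*c) := by ring
    linarith
  -- the points
  set A : Fin (n + 2) → EuclideanSpace ℝ (Fin n) := fun i =>
    if (i:ℕ) = 0 then WithLp.toLp 2 (fun _ => t)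
    else if h : (i:ℕ) = n + 1 then WithLp.toLp 2 (fun _ => w)
    else EuclideanSpace.single ⟨(i:ℕ) - 1, by have := i.isLt; omega⟩ q with hA
  -- distance computation helpers
  have dist_const_single : ∀ (p : ℝ) (j : Fin n) (x : EuclideanSpace ℝ (Fin n)),
      (∀ k, x k = p) →
      dist x (EuclideanSpace.single j q)
        = Real.sqrt (N * p ^ 2 + ((p - q) ^ 2 - p ^ 2)) := by
    intro p j x hx
    rw [euclidDistEq]
    congr 1
    have : ∀ k : Fin n, (x k - EuclideanSpace.single j q k) ^ 2
        = p ^ 2 + (if k = j then (p - q) ^ 2 - p ^ 2 else 0) := by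
      intro k
      rw [hx k, EuclideanSpace.single_apply]
      split_ifs <;> ring
    rw [Finset.sum_congr rfl fun k _ => this k, Finset.sum_add_distrib,
      Finset.sum_const, Finset.sum_ite_eq' Finset.univ j]
    simp [mul_comm, hNdef]
  have dist_single_single : ∀ (i j : Fin n), i ≠ j →
      dist (EuclideanSpace.single i q) (EuclideanSpace.single j q : EuclideanSpace ℝ (Fin n)) = 1 := by
    intro i j hij
    rw [euclidDistEq]
    have : ∀ k : Fin n, ((EuclideanSpace.single i q : EuclideanSpace ℝ (Fin n)) k
        - (EuclideanSpace.single j q : EuclideanSpace ℝ (Fin n)) k) ^ 2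
        = (if k = i then q ^ 2 else 0) + (if k = j then q ^ 2 else 0) := by
      intro k
      rw [EuclideanSpace.single_apply, EuclideanSpace.single_apply]
      split_ifs with h1 h2 h2
      · exact absurd (h1.symm.trans h2) hij
      all_goals ring
    rw [Finset.sum_congr rfl fun k _ => this k, Finset.sum_add_distrib,
      Finset.sum_ite_eq' Finset.univ i, Finset.sum_ite_eq' Finset.univ j]
    simp only [Finset.mem_univ, if_true]
    rw [V2, Real.sqrt_one]
  have dist_const_const : ∀ x y : EuclideanSpace ℝ (Fin n),
      (∀ k, x k = t) → (∀ k, y k = w) → dist x y = 1 := by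
    intro x y hx hy
    rw [euclidDistEq]
    have : ∀ k : Fin n, (x k - y k) ^ 2 = (c⁻¹) ^ 2 := by
      intro k
      rw [hx k, hy k, hwdef]; ring
    rw [Finset.sum_congr rfl fun k _ => this k, Finset.sum_const]
    simp only [Finset.card_univ, Fintype.card_fin, nsmul_eq_mul]
    rw [← hNdef, V3, Real.sqrt_one]
  -- classification of pairwise distances
  have hdist : ∀ i j : Fin (n + 2), i < j →
      dist (A i) (A j) = if (j:ℕ) = n + 1 ∧ (i:ℕ) ≠ 0 then d else 1 := by
    intro i j hij
    have hij' : (i:ℕ) < (j:ℕ) := hij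
    by_cases hjl : (j:ℕ) = n + 1
    · by_cases hi0 : (i:ℕ) = 0
      · rw [if_neg (fun h => h.2 hi0)]
        simp only [hA]
        rw [if_pos hi0, if_neg (by omega : ¬ ((j:ℕ) = 0)), dif_pos hjl]
        exact dist_const_const _ _ (fun _ => rfl) (fun _ => rfl)
      · have hil : (i:ℕ) ≠ n + 1 := by omega
        rw [if_pos ⟨hjl, hi0⟩]
        simp only [hA]
        rw [if_neg hi0, dif_neg hil, if_neg (by omega : ¬ ((j:ℕ) = 0)), dif_pos hjl]
        rw [dist_comm, dist_const_single w _ _ (fun _ => rfl), hddef, V4]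
    · have hjl' : (j:ℕ) ≠ n + 1 := hjl
      have hj0 : (j:ℕ) ≠ 0 := by omega
      rw [if_neg (fun h => hjl h.1)]
      by_cases hi0 : (i:ℕ) = 0
      · simp only [hA]
        rw [if_pos hi0, if_neg hj0, dif_neg hjl']
        rw [dist_const_single t _ _ (fun _ => rfl), V1, Real.sqrt_one]
      · have hil : (i:ℕ) ≠ n + 1 := by omega
        simp only [hA]
        rw [if_neg hi0, dif_neg hil, if_neg hj0, dif_neg hjl']
        apply dist_single_single
        intro hEq
        have hv := congrArg Fin.val hEq
        simp only [Fin.val_mk] at hv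
        omega
  have h01 : (0 : Fin (n+2)) < 1 := by
    rw [Fin.lt_def, Fin.val_zero, Fin.val_one]
    norm_num
  refine ⟨A, ⟨⟨0, 1, h01, ?_⟩, ?_⟩, ?_⟩
  · rw [hdist 0 1 h01, if_neg]
    rintro ⟨h1, -⟩
    rw [Fin.val_one] at h1
    omega
  · rintro x ⟨i, j, hij, rfl⟩
    rw [hdist i j hij]
    split_ifs
    · exact hd_le_one
    · exact le_refl 1
  · -- the sum
    rw [Finset.sum_filter, Fintype.sum_prod_type_right]
    have hinner : ∀ j : Fin (n + 2),
        (∑ i : Fin (n+2), if i < j then dist (A i) (A j) else 0)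
          = if (j:ℕ) = n + 1 then 1 + n * d else ((j:ℕ) : ℝ) := by
      intro j
      by_cases hjl : (j:ℕ) = n + 1
      · rw [if_pos hjl]
        have : ∀ i : Fin (n+2), (if i < j then dist (A i) (A j) else 0)
            = (if (i:ℕ) = n+1 then 0 else d) + (if i = 0 then 1 - d else 0) := by
          intro i
          by_cases hil : (i:ℕ) = n + 1
          · rw [if_neg (by rw [Fin.lt_def]; omega), if_pos hil,
              if_neg (by intro h; rw [h] at hil; simp only [Fin.val_zero] at hil; omega)]
            ring
          · have hlt : i < j := by rw [Fin.lt_def]; omega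
            rw [if_pos hlt, hdist i j hlt, if_neg hil]
            by_cases hi0 : (i:ℕ) = 0
            · rw [if_neg (by tauto), if_pos (by exact Fin.ext hi0)]
              ring
            · rw [if_pos ⟨hjl, hi0⟩, if_neg (by intro h; exact hi0 (by rw [h]; rfl))]
              ring
        rw [Finset.sum_congr rfl fun i _ => this i, Finset.sum_add_distrib,
          Finset.sum_ite_eq' Finset.univ (0 : Fin (n+2))]
        have : (∑ i : Fin (n+2), if (i:ℕ) = n+1 then (0:ℝ) else d) = (n+1) * d := by
          have e : ∀ i : Fin (n+2), (if (i:ℕ) = n+1 then (0:ℝ) else d)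
              = d - (if i = Fin.last (n+1) then d else 0) := by
            intro i
            by_cases hil : (i:ℕ) = n + 1
            · rw [if_pos hil, if_pos (Fin.ext hil)]; ring
            · rw [if_neg hil, if_neg (by intro h; exact hil (by rw [h]; rfl))]; ring
          rw [Finset.sum_congr rfl fun i _ => e i, Finset.sum_sub_distrib,
            Finset.sum_const, Finset.sum_ite_eq' Finset.univ (Fin.last (n+1))]
          simp only [Finset.mem_univ, if_true, Finset.card_univ, Fintype.card_fin,
            nsmul_eq_mul]
          push_cast; ring
        rw [this]
        simp only [Finset.mem_univ, if_true]
        push_cast; ring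
      · rw [if_neg hjl]
        have : ∀ i : Fin (n+2), (if i < j then dist (A i) (A j) else 0)
            = (if i < j then 1 else 0) := by
          intro i
          by_cases hlt : i < j
          · rw [if_pos hlt, if_pos hlt, hdist i j hlt, if_neg (by tauto)]
          · rw [if_neg hlt, if_neg hlt]
        rw [Finset.sum_congr rfl fun i _ => this i, Finset.sum_ite, Finset.sum_const,
          Finset.sum_const]
        have : (Finset.univ.filter (fun i : Fin (n+2) => i < j)) = Finset.Iio j := by
          ext i; simp
        rw [this, Fin.card_Iio]
        simp
    rw [Finset.sum_congr rfl fun j _ => hinner j]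
    have e : ∀ j : Fin (n+2), (if (j:ℕ) = n + 1 then 1 + n * d else ((j:ℕ) : ℝ))
        = ((j:ℕ) : ℝ) + (if j = Fin.last (n+1) then 1 + n*d - (n+1) else 0) := by
      intro j
      by_cases hjl : (j:ℕ) = n + 1
      · rw [if_pos hjl, if_pos (Fin.ext hjl), hjl]; push_cast; ring
      · rw [if_neg hjl, if_neg (by intro h; exact hjl (by rw [h]; rfl))]; ring
    rw [Finset.sum_congr rfl fun j _ => e j, Finset.sum_add_distrib,
      Finset.sum_ite_eq' Finset.univ (Fin.last (n+1))]
    rw [gaussFin n]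
    simp only [Finset.mem_univ, if_true]
    rw [Nat.cast_choose_two]
    have hrd : Real.sqrt (2 * (1 - Real.sqrt (((n:ℝ) + 1) / (2 * (n:ℝ))))) = d := by
      rw [hddef, ← hNdef, hsq]
    rw [show ((n:ℝ)+1)/(2*(n:ℝ)) = ((n:ℝ)+1)/(2*(n:ℝ)) from rfl]
    rw [hrd]
    push_cast
    ring
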